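/- For λ ∈ (0,1), the depolarising channel 𝓔_λ(x) = λx + (1−λ)(tr(x)/d)·1 on d×d matrices is Bures contractive: for all distinct density matrices σ, ρ, d_B(𝓔_λ(σ), 𝓔_λ(ρ)) < d_B(σ,ρ). -/

import Mathlib

open scoped Matrix ComplexOrder

/-- The positive square root of a positive semidefinite matrix (junk value `0` otherwise). -/
noncomputable def matSqrt {d : ℕ} (x : Matrix (Fin d) (Fin d) ℂ) : Matrix (Fin d) (Fin d) ℂ :=
  @dite _ x.PosSemidef (Classical.propDecidable _) (fun h => (h.1.eigenvectorUnitary : Matrix (Fin d) (Fin d) ℂ) *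
    Matrix.diagonal ((↑) ∘ (h.1.eigenvalues · |>.sqrt)) *
    (star h.1.eigenvectorUnitary : Matrix (Fin d) (Fin d) ℂ)) (fun _ => 0)

/-- The absolute value `|x| = (xᴴx)^{1/2}` of a matrix. -/
noncomputable def matAbs {d : ℕ} (x : Matrix (Fin d) (Fin d) ℂ) : Matrix (Fin d) (Fin d) ℂ :=
  matSqrt (xᴴ * x)

/-- Fidelity `F(σ,ρ) = tr |σ^{1/2} ρ^{1/2}|`. -/
noncomputable def fid {d : ℕ} (σ ρ : Matrix (Fin d) (Fin d) ℂ) : ℝ :=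
  (matAbs (matSqrt σ * matSqrt ρ)).trace.re

/-- Bures distance `d_B(σ,ρ) = √(1 - F(σ,ρ))`. -/
noncomputable def dB {d : ℕ} (σ ρ : Matrix (Fin d) (Fin d) ℂ) : ℝ :=
  Real.sqrt (1 - fid σ ρ)

/-- The square root of a positive semidefinite matrix, in eigenbasis form. -/
noncomputable def Matrix.PosSemidef.sqrt {d : ℕ} {x : Matrix (Fin d) (Fin d) ℂ}
    (h : x.PosSemidef) : Matrix (Fin d) (Fin d) ℂ :=
  (h.1.eigenvectorUnitary : Matrix (Fin d) (Fin d) ℂ) *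
    Matrix.diagonal ((↑) ∘ (h.1.eigenvalues · |>.sqrt)) *
    (star h.1.eigenvectorUnitary : Matrix (Fin d) (Fin d) ℂ)

open scoped MatrixOrder in
lemma Matrix.PosSemidef.sqrt_eq_cfcSqrt {d : ℕ} {x : Matrix (Fin d) (Fin d) ℂ}
    (h : x.PosSemidef) : h.sqrt = CFC.sqrt x := by
  rw [CFC.sqrt_eq_cfc, cfc_nnreal_eq_real _ x h.nonneg, h.1.cfc_eq]
  simp only [Matrix.IsHermitian.cfc, Unitary.conjStarAlgAut_apply, Matrix.PosSemidef.sqrt]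
  congr 2
  congr 1
  funext i
  simp [max_eq_left (h.eigenvalues_nonneg i)]

open scoped MatrixOrder in
lemma Matrix.PosSemidef.posSemidef_sqrt {d : ℕ} {x : Matrix (Fin d) (Fin d) ℂ}
    (h : x.PosSemidef) : h.sqrt.PosSemidef := by
  rw [h.sqrt_eq_cfcSqrt]
  exact Matrix.nonneg_iff_posSemidef.mp (CFC.sqrt_nonneg x)

open scoped MatrixOrder in
lemma Matrix.PosSemidef.sqrt_mul_self {d : ℕ} {x : Matrix (Fin d) (Fin d) ℂ}
    (h : x.PosSemidef) : h.sqrt * h.sqrt = x := by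
  rw [h.sqrt_eq_cfcSqrt]
  exact CFC.sqrt_mul_sqrt_self x h.nonneg

open scoped MatrixOrder in
lemma Matrix.PosSemidef.eq_sqrt_of_sq_eq {d : ℕ} {A : Matrix (Fin d) (Fin d) ℂ}
    (hA : A.PosSemidef) {B : Matrix (Fin d) (Fin d) ℂ} (hB : B.PosSemidef) (hAB : A ^ 2 = B) :
    A = hB.sqrt := by
  rw [hB.sqrt_eq_cfcSqrt, eq_comm, CFC.sqrt_eq_iff B A hB.nonneg hA.nonneg]
  exact (sq A).symm.trans hAB

section Aux

variable {d : ℕ}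

lemma matSqrt_eq {x : Matrix (Fin d) (Fin d) ℂ} (h : x.PosSemidef) : matSqrt x = h.sqrt := by
  unfold matSqrt; rw [dif_pos h]; rfl

lemma matSqrt_posSemidef {x : Matrix (Fin d) (Fin d) ℂ} (h : x.PosSemidef) :
    (matSqrt x).PosSemidef := by rw [matSqrt_eq h]; exact h.posSemidef_sqrt

lemma matSqrt_mul_self {x : Matrix (Fin d) (Fin d) ℂ} (h : x.PosSemidef) :
    matSqrt x * matSqrt x = x := by rw [matSqrt_eq h]; exact h.sqrt_mul_self

/-- trace of `Xᴴ X` as a sum of `normSq`s. -/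
lemma trace_conjTranspose_mul_self (X : Matrix (Fin d) (Fin d) ℂ) :
    (Xᴴ * X).trace = ((∑ j : Fin d, ∑ i : Fin d, Complex.normSq (X i j) : ℝ) : ℂ) := by
  push_cast
  simp only [Matrix.trace, Matrix.diag, Matrix.mul_apply, Matrix.conjTranspose_apply]
  refine Finset.sum_congr rfl fun j _ => Finset.sum_congr rfl fun i _ => ?_
  rw [Complex.star_def, ← Complex.normSq_eq_conj_mul_self]

lemma posSemidef_trace_re_nonneg {M : Matrix (Fin d) (Fin d) ℂ} (hM : M.PosSemidef) :
    0 ≤ M.trace.re := by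
  rw [Matrix.trace, Complex.re_sum]
  refine Finset.sum_nonneg fun i _ => ?_
  have := hM.dotProduct_mulVec_nonneg (Pi.single i 1)
  rw [Complex.nonneg_iff] at this
  convert this.1 using 2
  case e'_2 => rfl
  simp [Matrix.mulVec_single, dotProduct, Pi.single_apply, Matrix.diag,
    apply_ite (star : ℂ → ℂ)]

/-- Cauchy–Schwarz for the Frobenius inner product. -/
lemma traceCS (X Y : Matrix (Fin d) (Fin d) ℂ) :
    ((Xᴴ * Y).trace).re ≤
      Real.sqrt ((Xᴴ * X).trace.re) * Real.sqrt ((Yᴴ * Y).trace.re) := by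
  set x : EuclideanSpace ℂ (Fin d × Fin d) := WithLp.toLp 2 (fun p : Fin d × Fin d => X p.2 p.1)
  set y : EuclideanSpace ℂ (Fin d × Fin d) := WithLp.toLp 2 (fun p : Fin d × Fin d => Y p.2 p.1)
  have hip : (Xᴴ * Y).trace = inner ℂ x y := by
    simp only [Matrix.trace, Matrix.diag, Matrix.mul_apply, Matrix.conjTranspose_apply]
    rw [← Finset.sum_product']
    simp [x, y, EuclideanSpace.inner_eq_star_dotProduct]
    rw [dotProduct]
    exact Finset.sum_congr rfl fun p _ => mul_comm _ _
  have key : ∀ (z : EuclideanSpace ℂ (Fin d × Fin d)) (Z : Matrix (Fin d) (Fin d) ℂ),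
      (∀ p : Fin d × Fin d, z p = Z p.2 p.1) →
      Real.sqrt ((Zᴴ * Z).trace.re) = ‖z‖ := by
    intro z Z hz
    rw [EuclideanSpace.norm_eq, trace_conjTranspose_mul_self, Complex.ofReal_re]
    congr 1
    rw [← Finset.sum_product']
    refine Finset.sum_congr rfl fun p _ => ?_
    rw [hz, Complex.sq_norm]
  have hx : Real.sqrt ((Xᴴ * X).trace.re) = ‖x‖ := key x X fun p => rfl
  have hy : Real.sqrt ((Yᴴ * Y).trace.re) = ‖y‖ := key y Y fun p => rfl
  rw [hip, hx, hy]
  calc (inner ℂ x y : ℂ).re ≤ ‖(inner ℂ x y : ℂ)‖ := Complex.re_le_norm _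
    _ ≤ ‖x‖ * ‖y‖ := norm_inner_le_norm x y

lemma posSemidef_trace_re_pos {W : Matrix (Fin d) (Fin d) ℂ} (hW : W ≠ 0) :
    0 < (Wᴴ * W).trace.re := by
  rw [trace_conjTranspose_mul_self, Complex.ofReal_re]
  have : ∃ i j, W i j ≠ 0 := by
    by_contra h
    push_neg at h
    exact hW (by ext i j; simpa using h i j)
  obtain ⟨i, j, hij⟩ := this
  refine Finset.sum_pos' (fun j' _ => Finset.sum_nonneg fun i' _ => Complex.normSq_nonneg _)
    ⟨j, Finset.mem_univ j, Finset.sum_pos' (fun i' _ => Complex.normSq_nonneg _)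
      ⟨i, Finset.mem_univ i, Complex.normSq_pos.mpr hij⟩⟩

lemma keyCS (A B : Matrix (Fin d) (Fin d) ℂ) :
    2 * (matAbs (Aᴴ * B)).trace.re ≤ (Aᴴ * A).trace.re + (Bᴴ * B).trace.re := by
  set C := Aᴴ * B with hCdef
  have hP : (Cᴴ * C).PosSemidef := Matrix.posSemidef_conjTranspose_mul_self C
  set T := matSqrt (Cᴴ * C) with hTdef
  have hT : T.PosSemidef := matSqrt_posSemidef hP
  have hTT : T * T = Cᴴ * C := matSqrt_mul_self hP
  have hH : T.IsHermitian := hT.1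
  obtain ⟨t, ht, U, hU2, hU1, spec⟩ :
      ∃ t : Fin d → ℝ, (∀ i, 0 ≤ t i) ∧ ∃ U : Matrix (Fin d) (Fin d) ℂ,
        Uᴴ * U = 1 ∧ U * Uᴴ = 1 ∧
        T = U * Matrix.diagonal (fun i => ((t i : ℝ) : ℂ)) * Uᴴ := by
    refine ⟨hH.eigenvalues, hT.eigenvalues_nonneg,
      (hH.eigenvectorUnitary : Matrix (Fin d) (Fin d) ℂ), ?_, ?_, ?_⟩
    · have := (Matrix.mem_unitaryGroup_iff').mp hH.eigenvectorUnitary.2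
      rwa [Matrix.star_eq_conjTranspose] at this
    · have := (Matrix.mem_unitaryGroup_iff).mp hH.eigenvectorUnitary.2
      rwa [Matrix.star_eq_conjTranspose] at this
    · have h := hH.spectral_theorem
      rw [Unitary.conjStarAlgAut_apply, Matrix.star_eq_conjTranspose] at h
      exact h
  clear hH
  set g : Fin d → ℂ := fun i => ((t i : ℝ) : ℂ) with hgdef
  set tp : Fin d → ℂ := fun i => if t i = 0 then 0 else (((t i)⁻¹ : ℝ) : ℂ) with htpdef
  set e : Fin d → ℂ := fun i => if t i = 0 then 0 else 1 with hedef
  set q : Fin d → ℂ := fun i => 1 - e i with hqdef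
  have hg0 : ∀ i, t i = 0 → g i = 0 := fun i h => by simp [hgdef, h]
  have hgne : ∀ i, t i ≠ 0 → (g i) ≠ 0 := by
    intro i h
    simp only [hgdef]
    exact_mod_cast h
  have s6 : ∀ i, tp i * (g i * g i) = g i := by
    intro i
    by_cases h : t i = 0
    · simp [htpdef, hg0 i h, h]
    · have hg := hgne i h
      simp only [htpdef, if_neg h, hgdef, Complex.ofReal_inv] at hg ⊢
      field_simp
  have s2 : ∀ i, tp i * (g i * g i) * tp i = e i := by
    intro i
    by_cases h : t i = 0
    · simp [htpdef, hg0 i h, h, hedef]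
    · have hg := hgne i h
      simp only [htpdef, hedef, if_neg h, hgdef, Complex.ofReal_inv] at hg ⊢
      field_simp
  have s5 : ∀ i, tp i * e i = tp i := by
    intro i
    by_cases h : t i = 0 <;> simp [htpdef, hedef, h]
  have s3 : ∀ i, q i * (g i * g i) * q i = 0 := by
    intro i
    by_cases h : t i = 0
    · simp [hg0 i h]
    · simp [hqdef, hedef, if_neg h]
  have htp_star : star tp = tp := by
    funext i
    simp only [Pi.star_apply, htpdef]
    by_cases h : t i = 0 <;> simp [h]
  have hq_star : star q = q := by
    funext i
    simp only [Pi.star_apply, hqdef, hedef]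
    by_cases h : t i = 0 <;> simp [h]
  set D := Matrix.diagonal g with hDdef
  have hUCCU : Uᴴ * (Cᴴ * C) * U = Matrix.diagonal (fun i => g i * g i) := by
    rw [← hTT, spec]
    have h1 : Uᴴ * (U * D * Uᴴ * (U * D * Uᴴ)) * U
        = (Uᴴ * U) * (D * ((Uᴴ * U) * (D * (Uᴴ * U)))) := by
      simp only [mul_assoc]
    rw [h1, hU2]
    simp only [Matrix.one_mul, Matrix.mul_one]
    rw [hDdef, Matrix.diagonal_mul_diagonal]
  set V := C * U * Matrix.diagonal tp with hVdef
  have hVconj : Vᴴ = Matrix.diagonal tp * (Uᴴ * Cᴴ) := by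
    rw [hVdef]
    simp only [Matrix.conjTranspose_mul, Matrix.diagonal_conjTranspose, htp_star, mul_assoc]
  have hVV : Vᴴ * V = Matrix.diagonal e := by
    have assoc1 : Vᴴ * V = Matrix.diagonal tp * (Uᴴ * (Cᴴ * C) * U) * Matrix.diagonal tp := by
      rw [hVconj, hVdef]
      simp only [mul_assoc]
    rw [assoc1, hUCCU, Matrix.diagonal_mul_diagonal, Matrix.diagonal_mul_diagonal,
      show (fun i => tp i * (g i * g i) * tp i) = e from funext s2]
  have hdtpe : Matrix.diagonal (fun i => tp i * e i) = Matrix.diagonal tp := by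
    rw [show (fun i => tp i * e i) = tp from funext s5]
  have hVe : V * Matrix.diagonal e = V := by
    rw [hVdef, mul_assoc, mul_assoc, Matrix.diagonal_mul_diagonal, hdtpe, ← mul_assoc]
  have hCUe : C * U * Matrix.diagonal e = C * U := by
    have hW : C * U * Matrix.diagonal q = 0 := by
      rw [← Matrix.conjTranspose_mul_self_eq_zero]
      have assoc2 : (C * U * Matrix.diagonal q)ᴴ * (C * U * Matrix.diagonal q)
          = (Matrix.diagonal q)ᴴ * (Uᴴ * (Cᴴ * C) * U) * Matrix.diagonal q := by
        simp only [Matrix.conjTranspose_mul, mul_assoc]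
      rw [assoc2, hUCCU, Matrix.diagonal_conjTranspose, hq_star,
        Matrix.diagonal_mul_diagonal, Matrix.diagonal_mul_diagonal]
      rw [show (fun i => q i * (g i * g i) * q i) = (fun _ : Fin d => (0 : ℂ)) from funext s3,
        Matrix.diagonal_zero]
    have hsum : Matrix.diagonal e + Matrix.diagonal q = 1 := by
      rw [Matrix.diagonal_add]
      have : (fun i => e i + q i) = fun _ : Fin d => (1 : ℂ) := by
        funext i
        simp [hqdef]
      rw [this, Matrix.diagonal_one]
    calc C * U * Matrix.diagonal e
        = C * U * Matrix.diagonal e + C * U * Matrix.diagonal q := by rw [hW, add_zero]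
      _ = C * U * (Matrix.diagonal e + Matrix.diagonal q) := by rw [Matrix.mul_add]
      _ = C * U := by rw [hsum, Matrix.mul_one]
  have htr : T.trace = ((A * V)ᴴ * (B * U)).trace := by
    have h1 : T.trace = D.trace := by
      rw [spec, Matrix.trace_mul_comm (U * D) Uᴴ, ← mul_assoc, hU2, Matrix.one_mul]
    have h2 : D = Vᴴ * (C * U) := by
      have assoc3 : Vᴴ * (C * U) = Matrix.diagonal tp * (Uᴴ * (Cᴴ * C) * U) := by
        rw [hVconj]
        simp only [mul_assoc]
      rw [assoc3, hUCCU, Matrix.diagonal_mul_diagonal,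
        show (fun i => tp i * (g i * g i)) = g from funext s6, hDdef]
    have h3 : Vᴴ * (C * U) = (A * V)ᴴ * (B * U) := by
      rw [hCdef]
      simp only [Matrix.conjTranspose_mul, mul_assoc]
    rw [h1, h2, h3]
  have hproj : ((A * V)ᴴ * (A * V)).trace.re ≤ (Aᴴ * A).trace.re := by
    set P := V * Vᴴ with hPdef
    have hPP : P * P = P := by
      have h4 : V * Vᴴ * (V * Vᴴ) = V * (Vᴴ * V) * Vᴴ := by simp only [mul_assoc]
      rw [hPdef, h4, hVV, hVe]
    have hPh : Pᴴ = P := by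
      rw [hPdef, Matrix.conjTranspose_mul, Matrix.conjTranspose_conjTranspose]
    have hQh : (1 - P)ᴴ = 1 - P := by
      simp only [Matrix.conjTranspose_sub, Matrix.conjTranspose_one, hPh]
    have hQQ : (1 - P) * (1 - P) = 1 - P := by
      rw [Matrix.mul_sub, Matrix.sub_mul, Matrix.sub_mul, hPP]
      simp only [Matrix.mul_one, Matrix.one_mul]
      abel
    have hpsd : ((1 - P)ᴴ * (Aᴴ * A) * (1 - P)).PosSemidef :=
      (Matrix.posSemidef_conjTranspose_mul_self A).conjTranspose_mul_mul_same (1 - P)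
    have h5 : (A * V)ᴴ * (A * V) = Vᴴ * (Aᴴ * A) * V := by
      simp only [Matrix.conjTranspose_mul, mul_assoc]
    have e1 : ((A * V)ᴴ * (A * V)).trace = ((Aᴴ * A) * P).trace := by
      calc ((A * V)ᴴ * (A * V)).trace
          = (Vᴴ * (Aᴴ * A) * V).trace := by rw [h5]
        _ = (V * (Vᴴ * (Aᴴ * A))).trace := Matrix.trace_mul_comm _ _
        _ = ((V * Vᴴ) * (Aᴴ * A)).trace := congrArg Matrix.trace (mul_assoc V Vᴴ (Aᴴ * A)).symm
        _ = ((Aᴴ * A) * P).trace := by rw [← hPdef]; exact Matrix.trace_mul_comm _ _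
    have e2 : ((1 - P)ᴴ * (Aᴴ * A) * (1 - P)).trace = ((Aᴴ * A) * (1 - P)).trace := by
      calc ((1 - P)ᴴ * (Aᴴ * A) * (1 - P)).trace
          = ((1 - P) * (Aᴴ * A) * (1 - P)).trace := by rw [hQh]
        _ = ((1 - P) * ((1 - P) * (Aᴴ * A))).trace := Matrix.trace_mul_comm _ _
        _ = (((1 - P) * (1 - P)) * (Aᴴ * A)).trace :=
            congrArg Matrix.trace (mul_assoc (1 - P) (1 - P) (Aᴴ * A)).symm
        _ = ((1 - P) * (Aᴴ * A)).trace := by rw [hQQ]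
        _ = ((Aᴴ * A) * (1 - P)).trace := Matrix.trace_mul_comm _ _
    have hsplit : (Aᴴ * A).trace - ((A * V)ᴴ * (A * V)).trace
        = ((1 - P)ᴴ * (Aᴴ * A) * (1 - P)).trace := by
      rw [e1, e2, Matrix.mul_sub, Matrix.trace_sub, Matrix.mul_one]
    have h6 : 0 ≤ ((1 - P)ᴴ * (Aᴴ * A) * (1 - P)).trace.re := posSemidef_trace_re_nonneg hpsd
    rw [← hsplit, Complex.sub_re] at h6
    linarith
  have hmat : (matAbs C).trace.re = T.trace.re := rfl
  rw [hmat]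
  have hcs := traceCS (A * V) (B * U)
  have hBU : ((B * U)ᴴ * (B * U)).trace = (Bᴴ * B).trace := by
    have h7 : (B * U)ᴴ * (B * U) = Uᴴ * (Bᴴ * B) * U := by
      simp only [Matrix.conjTranspose_mul, mul_assoc]
    calc ((B * U)ᴴ * (B * U)).trace
        = (Uᴴ * (Bᴴ * B) * U).trace := by rw [h7]
      _ = (U * (Uᴴ * (Bᴴ * B))).trace := Matrix.trace_mul_comm _ _
      _ = ((U * Uᴴ) * (Bᴴ * B)).trace := congrArg Matrix.trace (mul_assoc U Uᴴ (Bᴴ * B)).symm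
      _ = (Bᴴ * B).trace := by rw [hU1, Matrix.one_mul]
  have ha : 0 ≤ ((A * V)ᴴ * (A * V)).trace.re :=
    posSemidef_trace_re_nonneg (Matrix.posSemidef_conjTranspose_mul_self _)
  have hb : 0 ≤ ((B * U)ᴴ * (B * U)).trace.re :=
    posSemidef_trace_re_nonneg (Matrix.posSemidef_conjTranspose_mul_self _)
  have m1 : T.trace.re ≤ Real.sqrt (((A * V)ᴴ * (A * V)).trace.re)
      * Real.sqrt (((B * U)ᴴ * (B * U)).trace.re) := by
    rw [htr]; exact hcs
  have m2 : Real.sqrt (((A * V)ᴴ * (A * V)).trace.re)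
        * Real.sqrt (((B * U)ᴴ * (B * U)).trace.re)
      ≤ (((A * V)ᴴ * (A * V)).trace.re + ((B * U)ᴴ * (B * U)).trace.re) / 2 := by
    nlinarith [sq_nonneg (Real.sqrt (((A * V)ᴴ * (A * V)).trace.re)
        - Real.sqrt (((B * U)ᴴ * (B * U)).trace.re)),
      Real.sq_sqrt ha, Real.sq_sqrt hb]
  have m3 : ((B * U)ᴴ * (B * U)).trace.re = (Bᴴ * B).trace.re := by rw [hBU]
  linarith

/-- Alberti-type lower bound: for invertible Hermitian `Y` with inverse `Z`,
`2 F(σ,ρ) ≤ tr(Y²σ) + tr(Z²ρ)`. -/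
lemma lemA {Y Z σ ρ : Matrix (Fin d) (Fin d) ℂ} (hY : Y.IsHermitian) (hZ : Z.IsHermitian)
    (hYZ : Y * Z = 1) (hσ : σ.PosSemidef) (hρ : ρ.PosSemidef) :
    2 * fid σ ρ ≤ ((Y * Y) * σ).trace.re + ((Z * Z) * ρ).trace.re := by
  have h := keyCS (Y * matSqrt σ) (Z * matSqrt ρ)
  have hσs : (matSqrt σ)ᴴ = matSqrt σ := (matSqrt_posSemidef hσ).isHermitian.eq
  have hρs : (matSqrt ρ)ᴴ = matSqrt ρ := (matSqrt_posSemidef hρ).isHermitian.eq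
  have e1 : (Y * matSqrt σ)ᴴ * (Z * matSqrt ρ) = matSqrt σ * matSqrt ρ := by
    rw [Matrix.conjTranspose_mul, hσs, hY.eq]
    calc matSqrt σ * Y * (Z * matSqrt ρ) = matSqrt σ * (Y * Z) * matSqrt ρ := by
          simp only [mul_assoc]
      _ = matSqrt σ * matSqrt ρ := by rw [hYZ, Matrix.mul_one]
  have e2 : ((Y * matSqrt σ)ᴴ * (Y * matSqrt σ)).trace = ((Y * Y) * σ).trace := by
    rw [Matrix.conjTranspose_mul, hσs, hY.eq]
    calc (matSqrt σ * Y * (Y * matSqrt σ)).trace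
        = (matSqrt σ * (Y * (Y * matSqrt σ))).trace := by rw [mul_assoc]
      _ = ((Y * (Y * matSqrt σ)) * matSqrt σ).trace := Matrix.trace_mul_comm _ _
      _ = ((Y * Y) * (matSqrt σ * matSqrt σ)).trace := by simp only [mul_assoc]
      _ = ((Y * Y) * σ).trace := by rw [matSqrt_mul_self hσ]
  have e3 : ((Z * matSqrt ρ)ᴴ * (Z * matSqrt ρ)).trace = ((Z * Z) * ρ).trace := by
    rw [Matrix.conjTranspose_mul, hρs, hZ.eq]
    calc (matSqrt ρ * Z * (Z * matSqrt ρ)).trace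
        = (matSqrt ρ * (Z * (Z * matSqrt ρ))).trace := by rw [mul_assoc]
      _ = ((Z * (Z * matSqrt ρ)) * matSqrt ρ).trace := Matrix.trace_mul_comm _ _
      _ = ((Z * Z) * (matSqrt ρ * matSqrt ρ)).trace := by simp only [mul_assoc]
      _ = ((Z * Z) * ρ).trace := by rw [matSqrt_mul_self hρ]
  rw [e1, e2, e3] at h
  exact h

set_option maxHeartbeats 1000000 in
lemma posDef_conj {M B : Matrix (Fin d) (Fin d) ℂ} (hM : M.PosDef) (hB : IsUnit B.det) :
    (B * M * Bᴴ).PosDef := by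
  refine Matrix.PosDef.of_dotProduct_mulVec_pos
    (Matrix.isHermitian_mul_mul_conjTranspose B hM.isHermitian) fun x hx => ?_
  have hx' : Bᴴ *ᵥ x ≠ 0 := by
    intro h0
    apply hx
    have hBH : IsUnit Bᴴ.det := by
      rw [Matrix.det_conjTranspose]
      exact hB.star
    have := congrArg (fun v => (Bᴴ)⁻¹ *ᵥ v) h0
    simpa [Matrix.mulVec_mulVec, Matrix.nonsing_inv_mul _ hBH] using this
  have h2 := hM.dotProduct_mulVec_pos hx'
  have h3 : star x ⬝ᵥ (B * M * Bᴴ) *ᵥ x = star (Bᴴ *ᵥ x) ⬝ᵥ M *ᵥ (Bᴴ *ᵥ x) := by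
    rw [Matrix.star_mulVec, Matrix.conjTranspose_conjTranspose, Matrix.mulVec_mulVec,
      Matrix.dotProduct_mulVec, Matrix.dotProduct_mulVec, Matrix.vecMul_vecMul, mul_assoc]
  rw [h3]
  exact h2

lemma posDef_of_isUnit_det {M : Matrix (Fin d) (Fin d) ℂ} (hM : M.PosSemidef)
    (h : IsUnit M.det) : M.PosDef := by
  refine Matrix.PosDef.of_dotProduct_mulVec_pos hM.isHermitian fun x hx => ?_
  rcases lt_or_eq_of_le (hM.dotProduct_mulVec_nonneg x) with hlt | heq
  · exact hlt
  · exfalso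
    apply hx
    have h0 : M *ᵥ x = 0 := (hM.dotProduct_mulVec_zero_iff x).mp heq.symm
    have := congrArg (fun v => M⁻¹ *ᵥ v) h0
    simpa [Matrix.mulVec_mulVec, Matrix.nonsing_inv_mul _ h] using this

lemma posDef_sqrt {M : Matrix (Fin d) (Fin d) ℂ} (hM : M.PosDef) :
    ((hM.posSemidef).sqrt).PosDef := by
  refine posDef_of_isUnit_det hM.posSemidef.posSemidef_sqrt ?_
  have h2 : (hM.posSemidef).sqrt * (hM.posSemidef).sqrt = M := hM.posSemidef.sqrt_mul_self
  have : IsUnit (M.det) := hM.isUnit.map (Matrix.detMonoidHom)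
  rw [← h2, Matrix.det_mul] at this
  exact isUnit_of_mul_isUnit_left this

lemma posDef_isUnit_det {M : Matrix (Fin d) (Fin d) ℂ} (hM : M.PosDef) : IsUnit M.det :=
  isUnit_iff_ne_zero.mpr hM.det_pos.ne'

lemma trace_sqrt_comm {M₀ : Matrix (Fin d) (Fin d) ℂ} (h : IsUnit M₀.det) :
    (Matrix.posSemidef_conjTranspose_mul_self M₀).sqrt.trace
      = (Matrix.posSemidef_self_mul_conjTranspose M₀).sqrt.trace := by
  set T := (Matrix.posSemidef_conjTranspose_mul_self M₀).sqrt with hTdef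
  have hT : T.PosSemidef := (Matrix.posSemidef_conjTranspose_mul_self M₀).posSemidef_sqrt
  have hTT : T * T = M₀ᴴ * M₀ := (Matrix.posSemidef_conjTranspose_mul_self M₀).sqrt_mul_self
  have hMHdet : IsUnit (M₀ᴴ).det := by
    rw [Matrix.det_conjTranspose]; exact h.star
  have hTdet : IsUnit T.det := by
    have : IsUnit ((M₀ᴴ * M₀).det) := by
      rw [Matrix.det_mul]; exact hMHdet.mul h
    rw [← hTT, Matrix.det_mul] at this
    exact isUnit_of_mul_isUnit_left this
  have hTinv : (T⁻¹).PosSemidef := hT.inv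
  set G := M₀ * T⁻¹ * M₀ᴴ with hGdef
  have hG : G.PosSemidef := hTinv.mul_mul_conjTranspose_same M₀
  have hGsq : G ^ 2 = M₀ * M₀ᴴ := by
    rw [pow_two, hGdef]
    calc M₀ * T⁻¹ * M₀ᴴ * (M₀ * T⁻¹ * M₀ᴴ)
        = M₀ * T⁻¹ * (M₀ᴴ * M₀) * T⁻¹ * M₀ᴴ := by simp only [mul_assoc]
      _ = M₀ * T⁻¹ * (T * T) * T⁻¹ * M₀ᴴ := by rw [hTT]
      _ = M₀ * ((T⁻¹ * T) * (T * T⁻¹)) * M₀ᴴ := by simp only [mul_assoc]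
      _ = M₀ * M₀ᴴ := by
          rw [Matrix.nonsing_inv_mul _ hTdet, Matrix.mul_nonsing_inv _ hTdet,
            Matrix.one_mul, Matrix.mul_one]
  have hGeq : G = (Matrix.posSemidef_self_mul_conjTranspose M₀).sqrt :=
    hG.eq_sqrt_of_sq_eq _ hGsq
  have htrG : G.trace = T.trace := by
    calc G.trace = (M₀ * T⁻¹ * M₀ᴴ).trace := by rw [hGdef]
      _ = (M₀ᴴ * (M₀ * T⁻¹)).trace := Matrix.trace_mul_comm _ _
      _ = (M₀ᴴ * M₀ * T⁻¹).trace := congrArg Matrix.trace (mul_assoc M₀ᴴ M₀ T⁻¹).symm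
      _ = (T * T * T⁻¹).trace := by rw [hTT]
      _ = (T * (T * T⁻¹)).trace := congrArg Matrix.trace (mul_assoc T T T⁻¹)
      _ = T.trace := by rw [Matrix.mul_nonsing_inv _ hTdet, Matrix.mul_one]
  rw [← hGeq, htrG]

/-- The optimizer for a pair of positive definite matrices. -/
lemma main_ineq {σ' ρ' : Matrix (Fin d) (Fin d) ℂ} (hσ' : σ'.PosDef) (hρ' : ρ'.PosDef) :
    ∃ Y Z : Matrix (Fin d) (Fin d) ℂ, Y.IsHermitian ∧ Z.IsHermitian ∧ Y * Z = 1 ∧ Z * Y = 1 ∧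
      ((Y * Y) * σ').trace.re + ((Z * Z) * ρ').trace.re = 2 * fid σ' ρ' ∧
      (Y * Y = 1 → σ' = ρ') := by
  have hσp : σ'.PosSemidef := hσ'.posSemidef
  have hρp : ρ'.PosSemidef := hρ'.posSemidef
  set s := matSqrt σ' with hsdef
  set r := matSqrt ρ' with hrdef
  have hs_eq : s = hσp.sqrt := matSqrt_eq hσp
  have hr_eq : r = hρp.sqrt := matSqrt_eq hρp
  have hsPD : s.PosDef := by rw [hs_eq]; exact posDef_sqrt hσ'
  have hrPD : r.PosDef := by rw [hr_eq]; exact posDef_sqrt hρ'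
  have hsH : sᴴ = s := hsPD.isHermitian.eq
  have hrH : rᴴ = r := hrPD.isHermitian.eq
  have hss : s * s = σ' := matSqrt_mul_self hσp
  have hrr : r * r = ρ' := matSqrt_mul_self hρp
  have hsdet : IsUnit s.det := posDef_isUnit_det hsPD
  have hrdet : IsUnit r.det := posDef_isUnit_det hrPD
  have hsinv : s⁻¹ * s = 1 := Matrix.nonsing_inv_mul _ hsdet
  have hsinv' : s * s⁻¹ = 1 := Matrix.mul_nonsing_inv _ hsdet
  have hsiH : (s⁻¹)ᴴ = s⁻¹ := by rw [Matrix.conjTranspose_nonsing_inv, hsH]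
  -- N = s ρ' s
  have hN : (s * ρ' * s).PosDef := by
    have := posDef_conj hρ' hsdet
    rwa [hsH] at this
  set N := s * ρ' * s with hNdef
  set n := (hN.posSemidef).sqrt with hndef
  have hnPD : n.PosDef := posDef_sqrt hN
  have hnp : n.PosSemidef := hN.posSemidef.posSemidef_sqrt
  have hnn : n * n = N := hN.posSemidef.sqrt_mul_self
  have hnH : nᴴ = n := hnp.isHermitian.eq
  have hndet : IsUnit n.det := posDef_isUnit_det hnPD
  have hninv : n⁻¹ * n = 1 := Matrix.nonsing_inv_mul _ hndet
  have hninv' : n * n⁻¹ = 1 := Matrix.mul_nonsing_inv _ hndet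
  -- X₀ = s⁻¹ n s⁻¹
  have hX : (s⁻¹ * n * s⁻¹).PosDef := by
    have := posDef_conj hnPD (Matrix.isUnit_nonsing_inv_det _ hsdet)
    rwa [hsiH] at this
  set X := s⁻¹ * n * s⁻¹ with hXdef
  set Y := (hX.posSemidef).sqrt with hYdef
  have hYPD : Y.PosDef := posDef_sqrt hX
  have hYp : Y.PosSemidef := hX.posSemidef.posSemidef_sqrt
  have hYY : Y * Y = X := hX.posSemidef.sqrt_mul_self
  have hYH : Y.IsHermitian := hYp.isHermitian
  have hYdet : IsUnit Y.det := posDef_isUnit_det hYPD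
  -- the two trace identities
  have tr1 : ((Y * Y) * σ').trace = n.trace := by
    have e : X * σ' = s⁻¹ * (n * s) := by
      rw [hXdef, ← hss]
      calc s⁻¹ * n * s⁻¹ * (s * s)
          = s⁻¹ * (n * ((s⁻¹ * s) * s)) := by simp only [mul_assoc]
        _ = s⁻¹ * (n * s) := by rw [hsinv, Matrix.one_mul]
    rw [hYY, e]
    calc (s⁻¹ * (n * s)).trace
        = ((n * s) * s⁻¹).trace := Matrix.trace_mul_comm _ _
      _ = (n * (s * s⁻¹)).trace := congrArg Matrix.trace (mul_assoc n s s⁻¹)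
      _ = n.trace := by rw [hsinv', Matrix.mul_one]
  have hZZ : Y⁻¹ * Y⁻¹ = s * (n⁻¹ * s) := by
    calc Y⁻¹ * Y⁻¹ = (Y * Y)⁻¹ := (Matrix.mul_inv_rev Y Y).symm
      _ = (s⁻¹ * n * s⁻¹)⁻¹ := by rw [hYY, hXdef]
      _ = (s⁻¹)⁻¹ * ((s⁻¹ * n)⁻¹) := Matrix.mul_inv_rev _ _
      _ = (s⁻¹)⁻¹ * (n⁻¹ * (s⁻¹)⁻¹) := by rw [Matrix.mul_inv_rev]
      _ = s * (n⁻¹ * s) := by rw [Matrix.nonsing_inv_nonsing_inv _ hsdet]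
  have tr2 : ((Y⁻¹ * Y⁻¹) * ρ').trace = n.trace := by
    rw [hZZ]
    calc (s * (n⁻¹ * s) * ρ').trace
        = (s * (n⁻¹ * (s * ρ'))).trace := by simp only [mul_assoc]
      _ = ((n⁻¹ * (s * ρ')) * s).trace := Matrix.trace_mul_comm _ _
      _ = (n⁻¹ * (s * ρ' * s)).trace := by simp only [mul_assoc]
      _ = (n⁻¹ * (n * n)).trace := by rw [← hNdef, ← hnn]
      _ = ((n⁻¹ * n) * n).trace := congrArg Matrix.trace (mul_assoc n⁻¹ n n).symm
      _ = n.trace := by rw [hninv, Matrix.one_mul]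
  -- fidelity equals trace of n
  have hfid : fid σ' ρ' = n.trace.re := by
    have hsr_det : IsUnit (s * r).det := by
      rw [Matrix.det_mul]; exact hsdet.mul hrdet
    have h1 : fid σ' ρ' = (Matrix.posSemidef_conjTranspose_mul_self (s * r)).sqrt.trace.re := by
      rw [fid, matAbs, ← hsdef, ← hrdef,
        matSqrt_eq (Matrix.posSemidef_conjTranspose_mul_self (s * r))]
    have h2 : n = (Matrix.posSemidef_self_mul_conjTranspose (s * r)).sqrt := by
      refine hnp.eq_sqrt_of_sq_eq _ ?_
      rw [pow_two, hnn, hNdef, Matrix.conjTranspose_mul, hsH, hrH]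
      calc s * ρ' * s = s * (r * r) * s := by rw [hrr]
        _ = s * r * (r * s) := by simp only [mul_assoc]
    rw [h1, trace_sqrt_comm hsr_det, ← h2]
  refine ⟨Y, Y⁻¹, hYH, ?_, Matrix.mul_nonsing_inv _ hYdet, Matrix.nonsing_inv_mul _ hYdet,
    ?_, ?_⟩
  · rw [Matrix.IsHermitian, Matrix.conjTranspose_nonsing_inv, hYH.eq]
  · rw [tr1, tr2, hfid]
    ring
  · intro hY1
    have hX1 : X = 1 := by rw [← hYY, hY1]
    have hn_eq : n = σ' := by
      have : s * X * s = n := by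
        rw [hXdef]
        calc s * (s⁻¹ * n * s⁻¹) * s
            = (s * s⁻¹) * n * (s⁻¹ * s) := by simp only [mul_assoc]
          _ = n := by rw [hsinv, hsinv', Matrix.one_mul, Matrix.mul_one]
      rw [← this, hX1, Matrix.mul_one, hss]
    have hNeq : s * ρ' * s = s * σ' * s := by
      calc s * ρ' * s = N := rfl
        _ = n * n := hnn.symm
        _ = σ' * σ' := by rw [hn_eq]
        _ = s * σ' * s := by rw [← hss]; simp only [mul_assoc]
    have cancel : ∀ τ : Matrix (Fin d) (Fin d) ℂ, s⁻¹ * (s * τ * s) * s⁻¹ = τ := by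
      intro τ
      calc s⁻¹ * (s * τ * s) * s⁻¹
          = (s⁻¹ * s) * (τ * (s * s⁻¹)) := by simp only [mul_assoc]
        _ = τ := by rw [hsinv, hsinv', Matrix.one_mul, Matrix.mul_one]
    have := congrArg (fun A => s⁻¹ * A * s⁻¹) hNeq
    simp only [cancel] at this
    exact this.symm

lemma smul_posSemidef {r : ℝ} (hr : 0 ≤ r) {M : Matrix (Fin d) (Fin d) ℂ}
    (hM : M.PosSemidef) : ((r : ℂ) • M).PosSemidef := by
  refine Matrix.PosSemidef.of_dotProduct_mulVec_nonneg ?_ fun x => ?_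
  · show ((r : ℂ) • M)ᴴ = (r : ℂ) • M
    rw [Matrix.conjTranspose_smul, hM.isHermitian.eq, Complex.star_def, Complex.conj_ofReal]
  · have h := hM.dotProduct_mulVec_nonneg x
    rw [Matrix.smul_mulVec, dotProduct_smul, smul_eq_mul]
    exact mul_nonneg (Complex.zero_le_real.mpr hr) h

lemma smul_one_posDef {c : ℝ} (hcp : 0 < c) :
    ((c : ℂ) • (1 : Matrix (Fin d) (Fin d) ℂ)).PosDef := by
  rw [Matrix.smul_one_eq_diagonal]
  exact Matrix.posDef_diagonal_iff.mpr fun i => Complex.zero_lt_real.mpr hcp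

lemma expand_trace {Q M : Matrix (Fin d) (Fin d) ℂ} (l c : ℝ) :
    (Q * ((l : ℂ) • M + (c : ℂ) • (1 : Matrix (Fin d) (Fin d) ℂ))).trace.re
      = l * (Q * M).trace.re + c * Q.trace.re := by
  rw [Matrix.mul_add, Matrix.trace_add, Matrix.mul_smul, Matrix.mul_smul,
    Matrix.mul_one, Matrix.trace_smul, Matrix.trace_smul, Complex.add_re,
    smul_eq_mul, smul_eq_mul]
  simp [Complex.mul_re]

end Aux

/-- for λ ∈ (0,1), the depolarising channel
𝓔_λ(x) = λx + (1-λ)(tr x / d)·1 is Bures contractive. -/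
theorem depolarising_bures_contractive {d : ℕ} (l : ℝ) (hl0 : 0 < l) (hl1 : l < 1)
    (σ ρ : Matrix (Fin d) (Fin d) ℂ)
    (hσ : σ.PosSemidef) (hρ : ρ.PosSemidef)
    (hσ1 : σ.trace = 1) (hρ1 : ρ.trace = 1) (hne : σ ≠ ρ) :
    dB ((l : ℂ) • σ + (((1 : ℂ) - (l : ℂ)) * (σ.trace / (d : ℂ))) • (1 : Matrix (Fin d) (Fin d) ℂ))
       ((l : ℂ) • ρ + (((1 : ℂ) - (l : ℂ)) * (ρ.trace / (d : ℂ))) • (1 : Matrix (Fin d) (Fin d) ℂ))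
      < dB σ ρ := by
  have hd : 0 < d := by
    rcases Nat.eq_zero_or_pos d with h | h
    · exfalso
      subst h
      rw [Matrix.trace] at hσ1
      simp at hσ1
    · exact h
  have hdR : (0 : ℝ) < (d : ℝ) := by exact_mod_cast hd
  set c : ℝ := (1 - l) / d with hcdef
  have hc : 0 < c := div_pos (by linarith) hdR
  have hcd : c * d = 1 - l := by
    rw [hcdef]; field_simp
  have hcoef : ((1 : ℂ) - (l : ℂ)) * ((1 : ℂ) / (d : ℂ)) = (c : ℂ) := by
    rw [hcdef]
    have : ((d : ℝ) : ℂ) = (d : ℂ) := by push_cast; ring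
    push_cast
    field_simp
  rw [hσ1, hρ1, hcoef]
  set σ' := (l : ℂ) • σ + (c : ℂ) • (1 : Matrix (Fin d) (Fin d) ℂ) with hσ'def
  set ρ' := (l : ℂ) • ρ + (c : ℂ) • (1 : Matrix (Fin d) (Fin d) ℂ) with hρ'def
  have hσ'PD : σ'.PosDef :=
    Matrix.PosDef.posSemidef_add (smul_posSemidef hl0.le hσ) (smul_one_posDef hc)
  have hρ'PD : ρ'.PosDef :=
    Matrix.PosDef.posSemidef_add (smul_posSemidef hl0.le hρ) (smul_one_posDef hc)
  -- traces of the depolarized states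
  have htrσ' : σ'.trace.re = 1 := by
    rw [hσ'def, Matrix.trace_add, Matrix.trace_smul, Matrix.trace_smul, hσ1,
      Matrix.trace_one]
    simp only [smul_eq_mul, mul_one]
    rw [Complex.add_re, Complex.ofReal_re]
    have : ((c : ℂ) * (Fintype.card (Fin d) : ℂ)).re = c * d := by
      simp [Complex.mul_re]
    rw [this]
    rw [hcd]
    ring
  have htrρ' : ρ'.trace.re = 1 := by
    rw [hρ'def, Matrix.trace_add, Matrix.trace_smul, Matrix.trace_smul, hρ1,
      Matrix.trace_one]
    simp only [smul_eq_mul, mul_one]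
    rw [Complex.add_re, Complex.ofReal_re]
    have : ((c : ℂ) * (Fintype.card (Fin d) : ℂ)).re = c * d := by
      simp [Complex.mul_re]
    rw [this, hcd]
    ring
  obtain ⟨Y, Z, hYH, hZH, hYZ, hZY, htr, himp⟩ := main_ineq hσ'PD hρ'PD
  -- fid σ ρ ≤ 1 and fid σ' ρ' ≤ 1
  have hfid_le : fid σ ρ ≤ 1 := by
    have h := lemA (Matrix.isHermitian_one) (Matrix.isHermitian_one)
      (Matrix.one_mul 1) hσ hρ
    rw [Matrix.one_mul, Matrix.one_mul, Matrix.one_mul, hσ1, hρ1] at h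
    simp only [Complex.one_re] at h
    linarith
  have hfid'_le : fid σ' ρ' ≤ 1 := by
    have h := lemA (Matrix.isHermitian_one) (Matrix.isHermitian_one)
      (Matrix.one_mul 1) hσ'PD.posSemidef hρ'PD.posSemidef
    rw [Matrix.one_mul, Matrix.one_mul, Matrix.one_mul] at h
    linarith [htrσ', htrρ', h]
  -- the variational lower bound at (σ, ρ)
  have hlemA := lemA hYH hZH hYZ hσ hρ
  -- expansions
  have hexp1 : ((Y * Y) * σ').trace.re
      = l * ((Y * Y) * σ).trace.re + c * (Y * Y).trace.re := expand_trace l c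
  have hexp2 : ((Z * Z) * ρ').trace.re
      = l * ((Z * Z) * ρ).trace.re + c * (Z * Z).trace.re := expand_trace l c
  -- strict AM-GM: tr(Y²) + tr(Z²) > 2d
  set W := Y - Z with hWdef
  have hWne : W ≠ 0 := by
    intro h0
    have hYZeq : Y = Z := by
      have := sub_eq_zero.mp h0
      exact this
    apply hne
    have hYY1 : Y * Y = 1 := by rw [hYZeq] at hYZ ⊢; exact hYZ
    have hσρ' : σ' = ρ' := himp hYY1
    have : (l : ℂ) • σ = (l : ℂ) • ρ := by
      have h := hσρ'
      rw [hσ'def, hρ'def] at h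
      exact add_right_cancel h
    have hlne : (l : ℂ) ≠ 0 := by
      simp only [ne_eq, Complex.ofReal_eq_zero]
      linarith
    exact smul_right_injective _ hlne this
  have hWH : Wᴴ = W := by
    rw [hWdef, Matrix.conjTranspose_sub, hYH.eq, hZH.eq]
  have hWsq : Wᴴ * W = Y * Y + Z * Z - (1 + 1) := by
    rw [hWH, hWdef]
    have expand : (Y - Z) * (Y - Z) = Y * Y + Z * Z - (Y * Z + Z * Y) := by
      noncomm_ring
    rw [expand, hYZ, hZY]
  have hAMGM : 2 * (d : ℝ) < (Y * Y).trace.re + (Z * Z).trace.re := by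
    have hpos := posSemidef_trace_re_pos hWne
    rw [hWsq] at hpos
    have : (Y * Y + Z * Z - (1 + 1)).trace.re
        = (Y * Y).trace.re + (Z * Z).trace.re - 2 * d := by
      rw [Matrix.trace_sub, Matrix.trace_add, Matrix.trace_add, Matrix.trace_one]
      rw [Complex.sub_re, Complex.add_re, Complex.add_re]
      simp
      ring
    rw [this] at hpos
    linarith
  -- assemble
  have hmain : l * fid σ ρ + (1 - l) < fid σ' ρ' := by
    have h1 : 2 * fid σ' ρ' = ((Y * Y) * σ').trace.re + ((Z * Z) * ρ').trace.re := htr.symm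
    rw [hexp1, hexp2] at h1
    nlinarith [hlemA, hAMGM, hc, hcd]
  -- conclude
  rw [dB, dB]
  apply Real.sqrt_lt_sqrt
  · linarith
  · nlinarith [hfid_le, hl0, hl1]
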